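/- Let L ⪰ 0 be symmetric with L𝟙 = 0 on a connected graph (kernel spanned by 𝟙), and let E ∈ ℝ^{n×k} satisfy 𝟙^T E = 0. Then for every γ > 0: E^T L^† E ⪯ γ I_k holds if and only if γ L − E E^T ⪰ 0. -/

import Mathlib

open Matrix

/-- Cauchy–Schwarz for the semi-inner product of a PSD matrix. -/
lemma psd_cauchy_schwarz {n : ℕ} (M : Matrix (Fin n) (Fin n) ℝ) (hM : M.PosSemidef)
    (x y : Fin n → ℝ) :
    (x ⬝ᵥ (M *ᵥ y)) ^ 2 ≤ (x ⬝ᵥ (M *ᵥ x)) * (y ⬝ᵥ (M *ᵥ y)) := by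
  have hsym : Mᵀ = M := hM.1
  have hq : ∀ z : Fin n → ℝ, 0 ≤ z ⬝ᵥ (M *ᵥ z) := fun z => by simpa using hM.dotProduct_mulVec_nonneg z
  set a := x ⬝ᵥ (M *ᵥ x) with ha
  set b := x ⬝ᵥ (M *ᵥ y) with hb
  set c := y ⬝ᵥ (M *ᵥ y) with hc
  have hvm : y ᵥ* M = M *ᵥ y := by
    nth_rewrite 1 [← hsym]
    exact vecMul_transpose M y
  have hyx : y ⬝ᵥ (M *ᵥ x) = b := by
    calc y ⬝ᵥ (M *ᵥ x) = (y ᵥ* M) ⬝ᵥ x := dotProduct_mulVec _ _ _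
      _ = (M *ᵥ y) ⬝ᵥ x := by rw [hvm]
      _ = x ⬝ᵥ (M *ᵥ y) := dotProduct_comm _ _
      _ = b := rfl
  have key : ∀ t : ℝ, 0 ≤ a + 2 * t * b + t ^ 2 * c := by
    intro t
    have h0 := hq (x + t • y)
    simp only [mulVec_add, mulVec_smul, dotProduct_add, add_dotProduct,
      dotProduct_smul, smul_dotProduct, smul_eq_mul] at h0
    rw [hyx] at h0
    rw [← ha, ← hb, ← hc] at h0
    nlinarith [h0]
  have hcnn : 0 ≤ c := hq y
  rcases eq_or_lt_of_le hcnn with hc0 | hcpos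
  · have hb0 : b = 0 := by
      by_contra hb0
      have ht := key (-(a + 1) / (2 * b))
      rw [← hc0] at ht
      have h2b : (2 : ℝ) * b ≠ 0 := by
        intro h; exact hb0 (by linarith [mul_eq_zero.mp h]; )
      have hsub : 2 * (-(a + 1) / (2 * b)) * b = -(a + 1) := by
        field_simp
      rw [mul_zero, add_zero] at ht
      have : 2 * (-(a + 1) / (2 * b)) * b = 2 * (-(a + 1) / (2 * b)) * b := rfl
      nlinarith [ht, hsub]
    have hann : 0 ≤ a := hq x
    rw [hb0, ← hc0]
    nlinarith
  · have ht := key (-(b / c))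
    have hcne : c ≠ 0 := ne_of_gt hcpos
    have h1 : 2 * (-(b / c)) * b = -(2 * (b ^ 2 / c)) := by ring
    have h2 : (-(b / c)) ^ 2 * c = b ^ 2 / c := by
      rw [neg_pow, div_pow]
      field_simp
    rw [h1, h2] at ht
    have h3 : 0 ≤ a - b ^ 2 / c := by linarith
    have h4 : b ^ 2 / c ≤ a := by linarith
    calc b ^ 2 = (b ^ 2 / c) * c := by field_simp
      _ ≤ a * c := mul_le_mul_of_nonneg_right h4 hcnn


/-- Shift matrices across a dot product. -/
lemma dp2 {p q r : ℕ} (A : Matrix (Fin p) (Fin q) ℝ) (B : Matrix (Fin p) (Fin r) ℝ)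
    (a : Fin q → ℝ) (b : Fin r → ℝ) :
    (A *ᵥ a) ⬝ᵥ (B *ᵥ b) = a ⬝ᵥ ((Aᵀ * B) *ᵥ b) := by
  rw [dotProduct_mulVec, ← vecMul_transpose A a, vecMul_vecMul, ← dotProduct_mulVec]

/-- `Lp` satisfies the four Penrose conditions for `L`, i.e. `Lp = L†`. -/
def IsMoorePenrose {n : ℕ} (L Lp : Matrix (Fin n) (Fin n) ℝ) : Prop :=
  L * Lp * L = L ∧ Lp * L * Lp = Lp ∧ (L * Lp)ᵀ = L * Lp ∧ (Lp * L)ᵀ = Lp * L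

/-- For a connected-graph PSD Laplacian `L` (kernel spanned by `𝟙`) and `E` with
`𝟙ᵀE = 0`, and every `γ > 0`: `Eᵀ L† E ⪯ γ I` iff `γL − EEᵀ ⪰ 0`. -/
theorem stmt_14 {n k : ℕ} (L Lp : Matrix (Fin n) (Fin n) ℝ) (hL : L.PosSemidef)
    (hL1 : L *ᵥ (fun _ => (1 : ℝ)) = 0)
    (hker : ∀ x : Fin n → ℝ, L *ᵥ x = 0 → ∃ c : ℝ, x = fun _ => c)
    (hLp : IsMoorePenrose L Lp)
    (E : Matrix (Fin n) (Fin k) ℝ) (hE : ∀ c, ∑ i, E i c = 0) :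
    ∀ γ : ℝ, 0 < γ →
      ((γ • (1 : Matrix (Fin k) (Fin k) ℝ) - Eᵀ * Lp * E).PosSemidef ↔
        (γ • L - E * Eᵀ).PosSemidef) := by
  obtain ⟨h1, h2, h3, h4⟩ := hLp
  have hLsym : Lᵀ = L := hL.1
  -- Lp is symmetric (uniqueness of the Moore–Penrose inverse for symmetric L)
  have hLpsym : Lpᵀ = Lp := by
    -- Lpᵀ is also a MP inverse of L
    have p1 : L * Lpᵀ * L = L := by
      have := congrArg Matrix.transpose h1
      simpa [Matrix.transpose_mul, hLsym, Matrix.mul_assoc] using this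
    have p2 : Lpᵀ * L * Lpᵀ = Lpᵀ := by
      have := congrArg Matrix.transpose h2
      simpa [Matrix.transpose_mul, hLsym, Matrix.mul_assoc] using this
    have p3 : (L * Lpᵀ)ᵀ = L * Lpᵀ := by
      calc (L * Lpᵀ)ᵀ = Lp * Lᵀ := by rw [Matrix.transpose_mul, Matrix.transpose_transpose]
        _ = Lp * L := by rw [hLsym]
        _ = (Lp * L)ᵀ := h4.symm
        _ = Lᵀ * Lpᵀ := by rw [Matrix.transpose_mul]
        _ = L * Lpᵀ := by rw [hLsym]
    have p4 : (Lpᵀ * L)ᵀ = Lpᵀ * L := by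
      calc (Lpᵀ * L)ᵀ = Lᵀ * Lp := by rw [Matrix.transpose_mul, Matrix.transpose_transpose]
        _ = L * Lp := by rw [hLsym]
        _ = (L * Lp)ᵀ := h3.symm
        _ = Lpᵀ * Lᵀ := by rw [Matrix.transpose_mul]
        _ = Lpᵀ * L := by rw [hLsym]
    -- uniqueness: with B = Lp, C = Lpᵀ
    have hab : L * Lp = L * Lpᵀ := by
      calc L * Lp = (L * Lpᵀ * L) * Lp := by rw [p1]
        _ = (L * Lpᵀ) * (L * Lp) := by rw [Matrix.mul_assoc]
        _ = (L * Lpᵀ)ᵀ * (L * Lp)ᵀ := by rw [p3, h3]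
        _ = ((L * Lp) * (L * Lpᵀ))ᵀ := (Matrix.transpose_mul (L * Lp) (L * Lpᵀ)).symm
        _ = ((L * Lp * L) * Lpᵀ)ᵀ := by congr 1; simp only [Matrix.mul_assoc]
        _ = (L * Lpᵀ)ᵀ := by rw [h1]
        _ = L * Lpᵀ := p3
    have hba : Lp * L = Lpᵀ * L := by
      calc Lp * L = Lp * (L * Lpᵀ * L) := by rw [p1]
        _ = (Lp * L) * (Lpᵀ * L) := by rw [Matrix.mul_assoc, Matrix.mul_assoc]
        _ = (Lp * L)ᵀ * (Lpᵀ * L)ᵀ := by rw [h4, p4]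
        _ = ((Lpᵀ * L) * (Lp * L))ᵀ := (Matrix.transpose_mul (Lpᵀ * L) (Lp * L)).symm
        _ = (Lpᵀ * (L * Lp * L))ᵀ := by congr 1; simp only [Matrix.mul_assoc]
        _ = (Lpᵀ * L)ᵀ := by rw [h1]
        _ = Lpᵀ * L := p4
    calc Lpᵀ = Lpᵀ * L * Lpᵀ := p2.symm
      _ = (Lp * L) * Lpᵀ := by rw [hba]
      _ = Lp * (L * Lpᵀ) := by rw [Matrix.mul_assoc]
      _ = Lp * (L * Lp) := by rw [hab]
      _ = Lp := by rw [← Matrix.mul_assoc, h2]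
  -- Lp is PSD
  have hLpPSD : Lp.PosSemidef := by
    have : Lp = Lpᵀ * L * Lp := by rw [hLpsym, h2]
    rw [this]
    have := hL.conjTranspose_mul_mul_same Lp
    simpa using this
  -- 𝟙ᵥ* L = 0
  have hL1' : (fun _ => (1 : ℝ)) ᵥ* L = 0 := by
    rw [← hLsym, vecMul_transpose, hL1]
  -- L * Lp * E = E
  have hproj : L * Lp * E = E := by
    rcases Nat.eq_zero_or_pos n with hn | hn
    · ext i j; exact absurd i.isLt (by omega)
    ext i c
    set v : Fin n → ℝ := fun j => E j c with hv
    have hvsum : ∑ j, v j = 0 := hE c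
    set w : Fin n → ℝ := v - (L * Lp) *ᵥ v with hw
    have hLL : L * (L * Lp) = L := by
      calc L * (L * Lp) = Lᵀ * (L * Lp)ᵀ := by rw [hLsym, h3]
        _ = ((L * Lp) * L)ᵀ := (Matrix.transpose_mul (L * Lp) L).symm
        _ = Lᵀ := by rw [Matrix.mul_assoc, ← Matrix.mul_assoc, h1]
        _ = L := hLsym
    have hLw : L *ᵥ w = 0 := by
      rw [hw, mulVec_sub, mulVec_mulVec, hLL, sub_self]
    obtain ⟨cc, hcc⟩ := hker w hLw
    have hsumw : ∑ j, w j = 0 := by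
      have h1w : ∑ j, ((L * Lp) *ᵥ v) j = (fun _ => (1:ℝ)) ⬝ᵥ ((L * Lp) *ᵥ v) := by
        simp [dotProduct]
      have hz : (fun _ => (1:ℝ)) ⬝ᵥ ((L * Lp) *ᵥ v) = 0 := by
        rw [dotProduct_mulVec, ← vecMul_vecMul, hL1']
        simp
      rw [hw]
      simp only [Pi.sub_apply, Finset.sum_sub_distrib, hvsum, h1w, hz, sub_zero]
    have hcc0 : cc = 0 := by
      rw [hcc] at hsumw
      simp at hsumw
      rcases hsumw with h | h
      · omega
      · exact h
    have hw0 : w = 0 := by rw [hcc, hcc0]; ext j; simp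
    have hfix : (L * Lp) *ᵥ v = v := by
      have := sub_eq_zero.mp (by rw [← hw]; exact hw0)
      exact this.symm
    calc (L * Lp * E) i c = ((L * Lp) *ᵥ v) i := by
          simp [Matrix.mul_apply, mulVec, dotProduct, hv]
      _ = v i := by rw [hfix]
      _ = E i c := rfl
  -- transposed version
  have hprojT : Eᵀ * (Lp * L) = Eᵀ := by
    have := congrArg Matrix.transpose hproj
    rw [Matrix.transpose_mul, Matrix.transpose_mul, hLpsym, hLsym] at this
    exact this
  have hdself : ∀ {p : ℕ} (v : Fin p → ℝ), 0 ≤ v ⬝ᵥ v := fun v =>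
    Finset.sum_nonneg fun i _ => mul_self_nonneg (v i)
  intro γ hγ
  have hq : ∀ {p : ℕ} (M : Matrix (Fin p) (Fin p) ℝ), M.PosSemidef →
      ∀ z : Fin p → ℝ, 0 ≤ z ⬝ᵥ (M *ᵥ z) := fun M hM z => by simpa using hM.dotProduct_mulVec_nonneg z
  constructor
  · -- γI - EᵀLpE ⪰ 0 → γL - EEᵀ ⪰ 0
    intro hP
    refine Matrix.PosSemidef.of_dotProduct_mulVec_nonneg ?_ ?_
    · show (γ • L - E * Eᵀ)ᴴ = _
      have hT : (γ • L - E * Eᵀ)ᵀ = γ • L - E * Eᵀ := by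
        rw [Matrix.transpose_sub, Matrix.transpose_smul, hLsym, Matrix.transpose_mul,
          Matrix.transpose_transpose]
      simpa using hT
    · intro x
      have hxs : star x = x := by simp
      rw [hxs]
      -- notation
      have hm : (Eᵀ *ᵥ x) ⬝ᵥ (Eᵀ *ᵥ x) = x ⬝ᵥ ((E * Eᵀ) *ᵥ x) := by
        rw [dp2, Matrix.transpose_transpose]
      -- Cauchy-Schwarz with vectors (E *ᵥ (Eᵀ *ᵥ x)) and (L *ᵥ x) in Lp
      have hcs := psd_cauchy_schwarz Lp hLpPSD (E *ᵥ (Eᵀ *ᵥ x)) (L *ᵥ x)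
      -- cross term equals m
      have hcross : (E *ᵥ (Eᵀ *ᵥ x)) ⬝ᵥ (Lp *ᵥ (L *ᵥ x)) = x ⬝ᵥ ((E * Eᵀ) *ᵥ x) := by
        rw [mulVec_mulVec, mulVec_mulVec, dp2]
        congr 2
        rw [Matrix.transpose_mul, Matrix.transpose_transpose, Matrix.mul_assoc, hprojT]
      -- first diagonal term
      have hterm1 : (E *ᵥ (Eᵀ *ᵥ x)) ⬝ᵥ (Lp *ᵥ (E *ᵥ (Eᵀ *ᵥ x)))
          = (Eᵀ *ᵥ x) ⬝ᵥ ((Eᵀ * Lp * E) *ᵥ (Eᵀ *ᵥ x)) := by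
        rw [mulVec_mulVec (M := Lp) (N := E), dp2, Matrix.mul_assoc]
      -- second diagonal term
      have hterm2 : (L *ᵥ x) ⬝ᵥ (Lp *ᵥ (L *ᵥ x)) = x ⬝ᵥ (L *ᵥ x) := by
        rw [mulVec_mulVec, dp2, hLsym, ← Matrix.mul_assoc, h1]
      -- bound from hP
      have hPw := hq _ hP (Eᵀ *ᵥ x)
      rw [sub_mulVec, dotProduct_sub, smul_mulVec, one_mulVec, dotProduct_smul,
        smul_eq_mul, hm] at hPw
      -- goal expansion
      rw [sub_mulVec, dotProduct_sub, smul_mulVec, dotProduct_smul, smul_eq_mul]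
      set q : ℝ := x ⬝ᵥ (L *ᵥ x) with hqdef
      set m : ℝ := x ⬝ᵥ ((E * Eᵀ) *ᵥ x) with hmdef
      have hqnn : 0 ≤ q := hq L hL x
      have hmnn : 0 ≤ m := by rw [← hm]; exact hdself _
      rw [hcross, hterm1, hterm2] at hcs
      have hbound : (Eᵀ *ᵥ x) ⬝ᵥ ((Eᵀ * Lp * E) *ᵥ (Eᵀ *ᵥ x)) ≤ γ * m := by linarith
      have hms : m ^ 2 ≤ γ * m * q := by
        calc m ^ 2 ≤ ((Eᵀ *ᵥ x) ⬝ᵥ ((Eᵀ * Lp * E) *ᵥ (Eᵀ *ᵥ x))) * q := hcs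
          _ ≤ (γ * m) * q := mul_le_mul_of_nonneg_right hbound hqnn
      nlinarith [hms, hmnn, hqnn, hγ, mul_nonneg hγ.le hqnn]
  · -- γL - EEᵀ ⪰ 0 → γI - EᵀLpE ⪰ 0
    intro hQ
    refine Matrix.PosSemidef.of_dotProduct_mulVec_nonneg ?_ ?_
    · show (γ • (1 : Matrix (Fin k) (Fin k) ℝ) - Eᵀ * Lp * E)ᴴ = _
      have hT : (γ • (1 : Matrix (Fin k) (Fin k) ℝ) - Eᵀ * Lp * E)ᵀ
          = γ • (1 : Matrix (Fin k) (Fin k) ℝ) - Eᵀ * Lp * E := by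
        rw [Matrix.transpose_sub, Matrix.transpose_smul, Matrix.transpose_one]
        congr 1
        rw [Matrix.transpose_mul, Matrix.transpose_mul, Matrix.transpose_transpose, hLpsym,
          Matrix.mul_assoc]
      simpa using hT
    · intro z
      have hzs : star z = z := by simp
      rw [hzs]
      -- x := (Lp * E) *ᵥ z
      set s : ℝ := z ⬝ᵥ ((Eᵀ * Lp * E) *ᵥ z) with hs
      have hM1 : (Lp * E)ᵀ * (L * (Lp * E)) = Eᵀ * Lp * E := by
        rw [Matrix.transpose_mul, hLpsym]
        calc (Eᵀ * Lp) * (L * (Lp * E)) = Eᵀ * (Lp * L * Lp) * E := by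
              simp only [Matrix.mul_assoc]
          _ = Eᵀ * Lp * E := by rw [h2]
      have hsx : ((Lp * E) *ᵥ z) ⬝ᵥ (L *ᵥ ((Lp * E) *ᵥ z)) = s := by
        rw [mulVec_mulVec, dp2, hs, hM1]
      have hww : ((Lp * E) *ᵥ z) ⬝ᵥ ((E * Eᵀ) *ᵥ ((Lp * E) *ᵥ z))
          = ((Eᵀ * Lp * E) *ᵥ z) ⬝ᵥ ((Eᵀ * Lp * E) *ᵥ z) := by
        rw [mulVec_mulVec, dp2, dp2]
        congr 2
        simp only [Matrix.transpose_mul, Matrix.transpose_transpose, hLpsym, Matrix.mul_assoc]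
      have hQx := hq _ hQ ((Lp * E) *ᵥ z)
      rw [sub_mulVec, dotProduct_sub, smul_mulVec, dotProduct_smul, smul_eq_mul,
        hsx, hww] at hQx
      have hcs := psd_cauchy_schwarz (1 : Matrix (Fin k) (Fin k) ℝ) Matrix.PosSemidef.one
        z ((Eᵀ * Lp * E) *ᵥ z)
      rw [one_mulVec, one_mulVec] at hcs
      have hzw : z ⬝ᵥ ((Eᵀ * Lp * E) *ᵥ z) = s := hs.symm
      rw [hzw] at hcs
      have hsnn : 0 ≤ s := by rw [← hsx]; exact hq L hL _
      have hznn : 0 ≤ z ⬝ᵥ z := hdself z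
      rw [sub_mulVec, dotProduct_sub, smul_mulVec, one_mulVec, dotProduct_smul,
        smul_eq_mul, ← hs]
      -- s² ≤ (z⬝z)(w⬝w) ≤ (z⬝z)·γs ⇒ s ≤ γ(z⬝z)
      have hwle : ((Eᵀ * Lp * E) *ᵥ z) ⬝ᵥ ((Eᵀ * Lp * E) *ᵥ z) ≤ γ * s := by linarith
      have hstep : s ^ 2 ≤ (z ⬝ᵥ z) * (γ * s) :=
        le_trans hcs (mul_le_mul_of_nonneg_left hwle hznn)
      nlinarith [hstep, hsnn, hznn, hγ, mul_nonneg hγ.le hznn]
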